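/- Let X be a nonempty set, f : X → ℝ, μ, σ : X → ℝ with σ(x) ≥ 0 and f(x) ≤ μ(x) + β·σ(x) for all x ∈ X, where β ≥ 0. Let b ∈ ℝ and δ > 0, and suppose that for every x ∈ X the expected improvement satisfies ∫ max(0, y − b) dN(μ(x), σ(x)²)(y) < δ. If σ is bounded above, then sup_{x ∈ X} f(x) ≤ b + δ + β · sup_{x ∈ X} σ(x). (Soundness of the Bayesian early-stopping criterion: if expected improvement is below δ everywhere and the upper confidence bounds are valid, the remaining gap to the optimum is at most δ plus β times the maximal predictive standard deviation.) -/

import Mathlib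

open ProbabilityTheory MeasureTheory Real
open scoped NNReal ENNReal

lemma integrable_mul_pdf (m : ℝ) {v : ℝ≥0} (hv : v ≠ 0) :
    Integrable (fun x => gaussianPDFReal m v x * x) := by
  have hv' : (0:ℝ) < v := lt_of_le_of_ne v.coe_nonneg (by exact_mod_cast hv.symm)
  have h0 : Integrable (fun y : ℝ => gaussianPDFReal 0 v y * (y + m)) := by
    have h1 : Integrable (fun y : ℝ => gaussianPDFReal 0 v y * y) := by
      have h : Integrable (fun y : ℝ => y * rexp (-(2*(v:ℝ))⁻¹ * y ^ 2)) :=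
        integrable_mul_exp_neg_mul_sq (by positivity)
      refine (h.const_mul (√(2 * π * v))⁻¹).congr (ae_of_all _ fun y => ?_)
      simp only [gaussianPDFReal, sub_zero]
      rw [neg_div, div_eq_mul_inv, mul_comm ((y:ℝ)^2)]
      ring
    have h2 : Integrable (fun y : ℝ => gaussianPDFReal 0 v y * m) :=
      (integrable_gaussianPDFReal 0 v).mul_const m
    simpa [mul_add, Pi.add_def] using h1.add h2
  refine (h0.comp_sub_right m).congr (ae_of_all _ fun x => ?_)
  have h3 : gaussianPDFReal 0 v (x - m) = gaussianPDFReal m v x := by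
    simp [gaussianPDFReal, sub_zero]
  simp only [h3]
  ring_nf

lemma integral_mul_pdf (m : ℝ) {v : ℝ≥0} (hv : v ≠ 0) :
    ∫ x, gaussianPDFReal m v x * x = m := by
  have key : (fun x => gaussianPDFReal m v x * x)
      = fun x => (fun y => gaussianPDFReal 0 v y * (y + m)) (x - m) := by
    funext x
    have h3 : gaussianPDFReal 0 v (x - m) = gaussianPDFReal m v x := by
      simp [gaussianPDFReal, sub_zero]
    simp only [h3]; ring_nf
  rw [key, integral_sub_right_eq_self (fun y => gaussianPDFReal 0 v y * (y + m)) m]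
  have h1 : Integrable (fun y : ℝ => gaussianPDFReal 0 v y * y) := by
    have := integrable_mul_pdf 0 hv
    simpa using this
  have h2 : Integrable (fun y : ℝ => gaussianPDFReal 0 v y * m) :=
    (integrable_gaussianPDFReal 0 v).mul_const m
  have : (fun y : ℝ => gaussianPDFReal 0 v y * (y + m))
      = fun y => gaussianPDFReal 0 v y * y + gaussianPDFReal 0 v y * m := by
    funext y; ring
  rw [this, integral_add h1 h2]
  have hodd : ∫ y, gaussianPDFReal 0 v y * y = 0 := by
    have hneg : ∫ y, gaussianPDFReal 0 v (-y) * (-y) = ∫ y, gaussianPDFReal 0 v y * y :=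
      integral_neg_eq_self (fun y => gaussianPDFReal 0 v y * y) volume
    have heven : ∀ y : ℝ, gaussianPDFReal 0 v (-y) = gaussianPDFReal 0 v y := by
      intro y; simp [gaussianPDFReal, neg_sq]
    have : ∫ y, gaussianPDFReal 0 v (-y) * (-y) = - ∫ y, gaussianPDFReal 0 v y * y := by
      simp_rw [heven, mul_neg]
      exact integral_neg _
    linarith [hneg, this]
  rw [hodd, integral_mul_const, integral_gaussianPDFReal_eq_one 0 hv]
  ring

lemma integral_id_gaussian (m : ℝ) (v : ℝ≥0) :
    ∫ x, x ∂(gaussianReal m v) = m := by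
  by_cases hv : v = 0
  · simp [hv]
  · rw [gaussianReal_of_var_ne_zero m hv]
    have hd : (gaussianPDF m v) = fun x => ((gaussianPDFReal m v x).toNNReal : ℝ≥0∞) := by
      funext x; rfl
    rw [hd, integral_withDensity_eq_integral_smul
      ((measurable_gaussianPDFReal m v).real_toNNReal) (fun x => x)]
    have heq : ∀ x : ℝ, (gaussianPDFReal m v x).toNNReal • x = gaussianPDFReal m v x * x := by
      intro x
      simp [NNReal.smul_def, Real.coe_toNNReal _ (gaussianPDFReal_nonneg m v x)]
    simp_rw [heq]
    exact integral_mul_pdf m hv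

lemma integrable_id_gaussian (m : ℝ) (v : ℝ≥0) :
    Integrable (fun x => x) (gaussianReal m v) := by
  by_cases hv : v = 0
  · rw [hv, gaussianReal_zero_var]
    exact (integrable_const m).congr (ae_eq_dirac (fun x : ℝ => x) (a := m)).symm
  · rw [gaussianReal_of_var_ne_zero m hv]
    have hd : (gaussianPDF m v) = fun x => ((gaussianPDFReal m v x).toNNReal : ℝ≥0∞) := by
      funext x; rfl
    rw [hd, integrable_withDensity_iff_integrable_smul
      ((measurable_gaussianPDFReal m v).real_toNNReal)]
    refine (integrable_mul_pdf m hv).congr (ae_of_all _ fun x => ?_)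
    simp [NNReal.smul_def, Real.coe_toNNReal _ (gaussianPDFReal_nonneg m v x)]

lemma mean_le_of_EI_lt {m : ℝ} {v : ℝ≥0} {b δ : ℝ}
    (h : ∫ y, max 0 (y - b) ∂(gaussianReal m v) < δ) : m ≤ b + δ := by
  have hId : Integrable (fun y : ℝ => y) (gaussianReal m v) := integrable_id_gaussian m v
  have hSub : Integrable (fun y : ℝ => y - b) (gaussianReal m v) :=
    hId.sub (integrable_const b)
  have hMax : Integrable (fun y : ℝ => max 0 (y - b)) (gaussianReal m v) := by
    refine hSub.mono ?_ (ae_of_all _ fun y => ?_)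
    · exact (continuous_const.max (continuous_id.sub continuous_const)).aestronglyMeasurable
    · rw [Real.norm_eq_abs, Real.norm_eq_abs, abs_of_nonneg (le_max_left _ _)]
      exact max_le (abs_nonneg _) (le_abs_self _)
  have hmono : ∫ y, (y - b) ∂(gaussianReal m v) ≤ ∫ y, max 0 (y - b) ∂(gaussianReal m v) :=
    integral_mono hSub hMax fun y => le_max_right _ _
  have hcalc : ∫ y, (y - b) ∂(gaussianReal m v) = m - b := by
    rw [integral_sub hId (integrable_const b), integral_id_gaussian, integral_const]
    simp
  rw [hcalc] at hmono
  linarith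

/-- Soundness of Bayesian early stopping: if the upper
confidence bounds are valid (`f x ≤ μ x + β σ x`, `β ≥ 0`, `σ ≥ 0`), `σ` is
bounded above, and the expected improvement over the incumbent `b` is below
`δ > 0` at every point, then `⨆ x, f x ≤ b + δ + β · ⨆ x, σ x`. -/
theorem bayesian_early_stop_sound
    {X : Type*} [Nonempty X] (f μ σ : X → ℝ) (β : ℝ) (hβ : 0 ≤ β)
    (hσnonneg : ∀ x, 0 ≤ σ x)
    (hvalid : ∀ x, f x ≤ μ x + β * σ x)
    (b δ : ℝ) (hδ : 0 < δ)
    (hEI : ∀ x, ∫ y, max 0 (y - b)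
        ∂(gaussianReal (μ x) ⟨(σ x) ^ 2, sq_nonneg (σ x)⟩) < δ)
    (hσbdd : BddAbove (Set.range σ)) :
    (⨆ x, f x) ≤ b + δ + β * ⨆ x, σ x := by
  refine ciSup_le fun x => ?_
  have hm : μ x ≤ b + δ := mean_le_of_EI_lt (hEI x)
  have hσ : σ x ≤ ⨆ x, σ x := le_ciSup hσbdd x
  have := hvalid x
  nlinarith [mul_le_mul_of_nonneg_left hσ hβ]
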